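/- Let s > 0 and N ≥ 1. For each weakly decreasing integer vector α ∈ ℤ^N with min_i α_i = 0 (representative of ℤ^{↓N}/ℤ), let ω_l(α) = α_l - α_{l+1} for 1 ≤ l ≤ N-1. Then the Weyl dimension d_α = ∏_{1≤i<j≤N} (α_i - α_j + j - i)/(j - i) satisfies d_α ≥ ∏_{l=1}^{N-1} (1 + ω_l(α))^{v_l}, where v_l = ∑_{1 ≤ i ≤ l < j ≤ N} 1/(j-i). -/
import Mathlib

open Finset

lemma telescope_aux (α : ℕ → ℤ) (i : ℕ) : ∀ j : ℕ, i ≤ j →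
    ∑ l ∈ Finset.Ico i j, ((α l : ℝ) - α (l + 1)) = (α i : ℝ) - α j := by
  intro j
  induction j with
  | zero => intro h; interval_cases i; simp
  | succ n ih =>
    intro h
    rcases Nat.lt_or_ge i (n + 1) with h' | h'
    · have hin : i ≤ n := Nat.lt_succ_iff.mp h'
      rw [Finset.sum_Ico_succ_top hin, ih hin]
      ring
    · have : i = n + 1 := le_antisymm h h'
      subst this; simp

/-- Lower bound on the Weyl dimension: for a weakly decreasing nonnegative integer
vector `α` (indexed `1,…,N`, with `α N = 0`), the Weyl dimension
`d_α = ∏_{1≤i<j≤N} (α_i - α_j + j - i)/(j-i)` satisfies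
`d_α ≥ ∏_{l=1}^{N-1} (1 + ω_l)^{v_l}` where `ω_l = α_l - α_{l+1}` and
`v_l = ∑_{1 ≤ i ≤ l < j ≤ N} 1/(j-i)`. -/
theorem stmt_6 (N : ℕ) (hN : 1 ≤ N) (α : ℕ → ℤ)
    (hdec : ∀ i j : ℕ, 1 ≤ i → i ≤ j → j ≤ N → α j ≤ α i)
    (hmin : α N = 0) :
    let pairs := (Finset.Icc 1 N ×ˢ Finset.Icc 1 N).filter fun p : ℕ × ℕ => p.1 < p.2
    let d : ℝ := ∏ p ∈ pairs, (((α p.1 : ℝ) - (α p.2 : ℝ) + (p.2 : ℝ) - (p.1 : ℝ)) /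
      ((p.2 : ℝ) - (p.1 : ℝ)))
    let v : ℕ → ℝ := fun l => ∑ p ∈ (Finset.Icc 1 N ×ˢ Finset.Icc 1 N).filter
      (fun p : ℕ × ℕ => p.1 ≤ l ∧ l < p.2), 1 / ((p.2 : ℝ) - (p.1 : ℝ))
    ∏ l ∈ Finset.Icc 1 (N - 1), (1 + ((α l : ℝ) - (α (l + 1) : ℝ))) ^ (v l) ≤ d := by
  intro pairs d v
  -- positivity of bases
  have hbase : ∀ l ∈ Finset.Icc 1 (N - 1), (0:ℝ) < 1 + ((α l : ℝ) - α (l + 1)) := by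
    intro l hl
    rw [Finset.mem_Icc] at hl
    have h1 : l + 1 ≤ N := by omega
    have := hdec l (l + 1) hl.1 (Nat.le_succ l) h1
    have : (α (l+1) : ℝ) ≤ α l := by exact_mod_cast this
    linarith
  -- step 1: rewrite LHS using rpow of sum
  have step1 : ∏ l ∈ Finset.Icc 1 (N - 1), (1 + ((α l : ℝ) - α (l + 1))) ^ (v l)
      = ∏ l ∈ Finset.Icc 1 (N - 1),
          ∏ p ∈ ((Finset.Icc 1 N ×ˢ Finset.Icc 1 N).filter
            fun p : ℕ × ℕ => p.1 ≤ l ∧ l < p.2),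
            (1 + ((α l : ℝ) - α (l + 1))) ^ (1 / ((p.2 : ℝ) - p.1)) := by
    refine Finset.prod_congr rfl fun l hl => ?_
    exact Real.rpow_sum_of_pos (hbase l hl) _ _
  -- step 2: swap the products
  have step2 : ∏ l ∈ Finset.Icc 1 (N - 1),
          ∏ p ∈ ((Finset.Icc 1 N ×ˢ Finset.Icc 1 N).filter
            fun p : ℕ × ℕ => p.1 ≤ l ∧ l < p.2),
            (1 + ((α l : ℝ) - α (l + 1))) ^ (1 / ((p.2 : ℝ) - p.1))
      = ∏ p ∈ pairs, ∏ l ∈ Finset.Ico p.1 p.2,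
            (1 + ((α l : ℝ) - α (l + 1))) ^ (1 / ((p.2 : ℝ) - p.1)) := by
    refine (Finset.prod_comm' ?_).symm
    intro p l
    simp only [pairs, Finset.mem_filter, Finset.mem_product, Finset.mem_Icc, Finset.mem_Ico]
    omega
  rw [step1, step2]
  -- step 3: per-pair AM-GM
  refine Finset.prod_le_prod (fun p hp => Finset.prod_nonneg fun l hl =>
    Real.rpow_nonneg ?_ _) (fun p hp => ?_)
  · simp only [pairs, Finset.mem_filter, Finset.mem_product, Finset.mem_Icc] at hp
    rw [Finset.mem_Ico] at hl
    have h1 : 1 ≤ l := le_trans hp.1.1.1 hl.1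
    have h2 : l + 1 ≤ N := by
      have := hp.1.2.2; omega
    have := hdec l (l + 1) h1 (Nat.le_succ l) h2
    have : (α (l+1) : ℝ) ≤ α l := by exact_mod_cast this
    linarith
  · simp only [pairs, Finset.mem_filter, Finset.mem_product, Finset.mem_Icc] at hp
    obtain ⟨⟨⟨hi1, hiN⟩, hj1, hjN⟩, hij⟩ := hp
    set i := p.1
    set j := p.2
    have hji : (0:ℝ) < (j : ℝ) - i := by
      have : (i:ℝ) < j := by exact_mod_cast hij
      linarith
    have hcard : ((Finset.Ico i j).card : ℝ) = (j : ℝ) - i := by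
      rw [Nat.card_Ico]
      push_cast [Nat.cast_sub (le_of_lt hij)]
      ring
    have key := Real.geom_mean_le_arith_mean_weighted (Finset.Ico i j)
      (fun _ => 1 / ((j : ℝ) - i)) (fun l => 1 + ((α l : ℝ) - α (l + 1)))
      (fun l _ => by positivity)
      (by rw [Finset.sum_const, nsmul_eq_mul, hcard]; field_simp)
      (fun l hl => by
        rw [Finset.mem_Ico] at hl
        have h1 : 1 ≤ l := le_trans hi1 hl.1
        have h2 : l + 1 ≤ N := by omega
        have := hdec l (l + 1) h1 (Nat.le_succ l) h2
        have : (α (l+1) : ℝ) ≤ α l := by exact_mod_cast this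
        show (0:ℝ) ≤ 1 + ((α l : ℝ) - α (l + 1))
        linarith)
    refine le_trans key (le_of_eq ?_)
    simp only [← Finset.mul_sum]
    rw [Finset.sum_add_distrib, Finset.sum_const, nsmul_eq_mul, hcard,
      telescope_aux α i j (le_of_lt hij)]
    field_simp
    ring
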